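/- Let P be a private preference profile with N individuals. For every Pareto efficient allocation x ∈ PE(P) and every individual i ∈ N, we have R(P_i, x_i) ≤ N, i.e., under any Pareto efficient allocation each individual receives a widget no worse than her N-th favorite. -/

import Mathlib

/-- The set of admissible allocations: each individual gets one and only one
widget, and no widget is assigned twice. -/
abbrev Alloc (N M : Type*) := {x : N → M // Function.Injective x}

/-- A private preference profile: each individual `i` has a strict linear order
(`pref i`) on the set of widgets `M`. -/
structure PrivProfile (N M : Type*) where
  pref : N → M → M → Prop
  irrefl : ∀ i x, ¬ pref i x x
  trans : ∀ i x y z, pref i x y → pref i y z → pref i x z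
  total : ∀ i x y, x ≠ y → pref i x y ∨ pref i y x

namespace PrivProfile

variable {N M : Type*}

/-- The ranking `R(P_i, m) = 1 + #{k ∈ M : k ≻_{P_i} m}`. -/
noncomputable def rank (P : PrivProfile N M) (i : N) (m : M) : ℕ :=
  1 + {k : M | P.pref i k m}.ncard

/-- Weak preference over widgets induced by the strict linear order. -/
def wpref (P : PrivProfile N M) (i : N) (a b : M) : Prop :=
  P.pref i a b ∨ a = b

/-- The set of Pareto efficient allocations. -/
def PE (P : PrivProfile N M) : Set (Alloc N M) :=
  {x | ¬ ∃ z : Alloc N M,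
    (∀ i, P.wpref i (z.1 i) (x.1 i)) ∧ (∃ j, P.pref j (z.1 j) (x.1 j))}

/-- `P ⊵ P'`: there is a surjection `ψ` from `PE(P')` onto `PE(P)` weakly
improving all ranking vectors. -/
def Dom (P P' : PrivProfile N M) : Prop :=
  ∃ ψ : Alloc N M → Alloc N M, Set.MapsTo ψ P'.PE P.PE ∧ Set.SurjOn ψ P'.PE P.PE ∧
    ∀ x ∈ P'.PE, ∀ i, P.rank i ((ψ x).1 i) ≤ P'.rank i (x.1 i)

/-- `P ≜ P'`. -/
def Equiv (P P' : PrivProfile N M) : Prop := Dom P P' ∧ Dom P' P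

/-- `P` is ⊵-maximal within the class of private profiles. -/
def Maximal (P : PrivProfile N M) : Prop := ∀ P' : PrivProfile N M, Dom P' P → Equiv P' P

/-- `P` is ⊵-minimal within the class of private profiles. -/
def Minimal (P : PrivProfile N M) : Prop := ∀ P' : PrivProfile N M, Dom P P' → Equiv P P'

end PrivProfile

/-- under any Pareto efficient allocation, each individual
receives a widget no worse than her `N`-th favorite: `R(P_i, x_i) ≤ N`. -/
theorem stmt_10 {N M : Type*} [Fintype N] [Fintype M]
    (hNM : Fintype.card N ≤ Fintype.card M) (P : PrivProfile N M)
    (x : Alloc N M) (hx : x ∈ P.PE) (i : N) :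
    P.rank i (x.1 i) ≤ Fintype.card N := by
  classical
  by_contra h
  push_neg at h
  have hScard : Fintype.card N < 1 + {k : M | P.pref i k (x.1 i)}.ncard := h
  set S : Set M := {k : M | P.pref i k (x.1 i)} with hSdef
  have hSN : Fintype.card N ≤ S.ncard := by omega
  have hxiS : x.1 i ∉ S := P.irrefl i _
  have hxiR : x.1 i ∈ Set.range x.1 := ⟨i, rfl⟩
  have hrange : (Set.range x.1).ncard = Fintype.card N := by
    have := Set.ncard_image_of_injective Set.univ x.2
    rwa [Set.image_univ, Set.ncard_univ, Nat.card_eq_fintype_card] at this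
  have hNpos : 0 < Fintype.card N := Fintype.card_pos_iff.mpr ⟨i⟩
  have hex : ∃ m, m ∈ S ∧ m ∉ Set.range x.1 := by
    by_contra hc
    push_neg at hc
    have hsub : S ⊆ Set.range x.1 \ {x.1 i} := by
      intro k hk
      refine ⟨hc k hk, ?_⟩
      simp only [Set.mem_singleton_iff]
      rintro rfl
      exact hxiS hk
    have hle := Set.ncard_le_ncard hsub (Set.finite_range x.1).diff
    rw [Set.ncard_diff_singleton_of_mem hxiR, hrange] at hle
    omega
  obtain ⟨m, hmS, hmR⟩ := hex
  have hzinj : Function.Injective (Function.update x.1 i m) := by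
    intro a b hab
    rcases eq_or_ne a i with rfl | ha
    · rcases eq_or_ne b a with rfl | hb
      · rfl
      · rw [Function.update_self, Function.update_of_ne hb] at hab
        exact absurd ⟨b, hab.symm⟩ hmR
    · rcases eq_or_ne b i with rfl | hb
      · rw [Function.update_self, Function.update_of_ne ha] at hab
        exact absurd ⟨a, hab⟩ hmR
      · rw [Function.update_of_ne ha, Function.update_of_ne hb] at hab
        exact x.2 hab
  apply hx
  refine ⟨⟨Function.update x.1 i m, hzinj⟩, ?_, ⟨i, ?_⟩⟩
  · intro j
    rcases eq_or_ne j i with rfl | hj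
    · exact Or.inl (by simpa [hSdef] using hmS)
    · exact Or.inr (Function.update_of_ne hj _ _)
  · simpa [hSdef] using hmS
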